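/- Let q, p be time-dependent probability distributions on a finite set X evolving under Kolmogorov forward equations d/dt q_t(y) = ∑_x q_t(x) Ř_t(x,y) and d/dt p_t(y) = ∑_x p_t(x) R̂_t(x,y) with valid rate matrices Ř_t, R̂_t (off-diagonal entries nonnegative, rows summing to zero), and suppose all probabilities remain strictly positive. Then d/dt KL(q_t ∥ p_t) ≤ E_{x∼q_t}[ ∑_{y≠x} ( R̂_t(x,y) − Ř_t(x,y) + Ř_t(x,y)·log( Ř_t(x,y)/R̂_t(x,y) ) ) ]. -/

import Mathlib

open Real Finset

lemma key_ineq (a b c d A B : ℝ) (ha : 0 < a) (hb : 0 < b) (hc : 0 < c) (hd : 0 < d)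
    (hA : 0 < A) (hB : 0 < B) :
    a * A * ((Real.log b - Real.log d) - (Real.log a - Real.log c)) - c * B * (b / d) + a * B
      ≤ a * (B - A + A * Real.log (A / B)) := by
  have hz : (0:ℝ) < b * c * B / (a * d * A) := by positivity
  have hlog := Real.log_le_sub_one_of_pos hz
  have h2 : a * A * Real.log (b * c * B / (a * d * A))
      ≤ a * A * (b * c * B / (a * d * A) - 1) :=
    mul_le_mul_of_nonneg_left hlog (by positivity)
  have h3 : a * A * (b * c * B / (a * d * A) - 1) = c * B * (b / d) - a * A := by
    field_simp
  have h4 : a * A * Real.log (b * c * B / (a * d * A))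
      = a * A * ((Real.log b - Real.log d) - (Real.log a - Real.log c)
          + (Real.log B - Real.log A)) := by
    rw [Real.log_div (by positivity) (by positivity),
        Real.log_mul (by positivity) hB.ne', Real.log_mul hb.ne' hc.ne',
        Real.log_mul (by positivity) hA.ne', Real.log_mul ha.ne' hd.ne']
    ring
  rw [Real.log_div hA.ne' hB.ne']
  nlinarith [h2, h3, h4]

theorem kl_differential_inequality {X : Type*} [Fintype X] [DecidableEq X]
    (q p : ℝ → X → ℝ) (Rq Rp : ℝ → X → X → ℝ) (t : ℝ)
    (hqpos : ∀ u x, 0 < q u x) (hppos : ∀ u x, 0 < p u x)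
    (hqsum : ∀ u, ∑ x, q u x = 1) (hpsum : ∀ u, ∑ x, p u x = 1)
    (hRqoff : ∀ u x y, x ≠ y → 0 < Rq u x y) (hRpoff : ∀ u x y, x ≠ y → 0 < Rp u x y)
    (hRqrow : ∀ u x, ∑ y, Rq u x y = 0) (hRprow : ∀ u x, ∑ y, Rp u x y = 0)
    (hqode : ∀ u y, HasDerivAt (fun v => q v y) (∑ x, q u x * Rq u x y) u)
    (hpode : ∀ u y, HasDerivAt (fun v => p v y) (∑ x, p u x * Rp u x y) u) :
    deriv (fun u => ∑ x, q u x * Real.log (q u x / p u x)) t ≤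
      ∑ x, q t x * ∑ y ∈ Finset.univ.filter (fun y => y ≠ x),
        (Rp t x y - Rq t x y + Rq t x y * Real.log (Rq t x y / Rp t x y)) := by
  set L : X → ℝ := fun x => Real.log (q t x) - Real.log (p t x) with hLdef
  -- derivative of each KL term
  have hL : ∀ x : X, HasDerivAt (fun u => q u x * Real.log (q u x / p u x))
      ((∑ z, q t z * Rq t z x) * L x
        + q t x * ((∑ z, q t z * Rq t z x) / q t x - (∑ z, p t z * Rp t z x) / p t x)) t := by
    intro x
    have h1 : (fun u => q u x * Real.log (q u x / p u x))
        = fun u => q u x * (Real.log (q u x) - Real.log (p u x)) := by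
      funext u; rw [Real.log_div (hqpos u x).ne' (hppos u x).ne']
    rw [h1]
    exact (hqode t x).mul
      (((hqode t x).log (hqpos t x).ne').sub ((hpode t x).log (hppos t x).ne'))
  have hD : HasDerivAt (fun u => ∑ x, q u x * Real.log (q u x / p u x))
      (∑ x, ((∑ z, q t z * Rq t z x) * L x
        + q t x * ((∑ z, q t z * Rq t z x) / q t x - (∑ z, p t z * Rp t z x) / p t x))) t :=
    HasDerivAt.fun_sum (fun x _ => hL x)
  rw [hD.deriv]
  -- simplify each summand
  have hsimp : ∀ x : X,
      (∑ z, q t z * Rq t z x) * L x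
        + q t x * ((∑ z, q t z * Rq t z x) / q t x - (∑ z, p t z * Rp t z x) / p t x)
      = ((∑ z, q t z * Rq t z x) * L x + (∑ z, q t z * Rq t z x))
          - (q t x / p t x) * (∑ z, p t z * Rp t z x) := by
    intro x
    have hq := (hqpos t x).ne'
    have hp := (hppos t x).ne'
    field_simp
    ring
  rw [Finset.sum_congr rfl (fun x _ => hsimp x), Finset.sum_sub_distrib,
    Finset.sum_add_distrib]
  have hzero : ∑ x, ∑ z, q t z * Rq t z x = 0 := by
    rw [Finset.sum_comm]
    simp only [← Finset.mul_sum, hRqrow t, mul_zero, Finset.sum_const_zero]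
  rw [hzero, add_zero]
  -- rewrite as a double sum over z then x
  have hswap : ∑ x, (∑ z, q t z * Rq t z x) * L x
        - ∑ x, (q t x / p t x) * (∑ z, p t z * Rp t z x)
      = ∑ z, ∑ x, (q t z * Rq t z x * L x - p t z * Rp t z x * (q t x / p t x)) := by
    rw [← Finset.sum_sub_distrib,
      show (∑ z, ∑ x, (q t z * Rq t z x * L x - p t z * Rp t z x * (q t x / p t x)))
          = ∑ x, ∑ z, (q t z * Rq t z x * L x - p t z * Rp t z x * (q t x / p t x)) from
        Finset.sum_comm]
    refine Finset.sum_congr rfl fun x _ => ?_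
    rw [Finset.sum_mul, Finset.mul_sum, ← Finset.sum_sub_distrib]
    exact Finset.sum_congr rfl fun z _ => by ring
  rw [hswap]
  -- per-row inequality
  refine Finset.sum_le_sum fun z _ => ?_
  have heq : ∑ x, (q t z * Rq t z x * L x - p t z * Rp t z x * (q t x / p t x))
      = ∑ x, (q t z * Rq t z x * (L x - L z) - p t z * Rp t z x * (q t x / p t x)
          + q t z * Rp t z x) := by
    have e1 : ∀ x : X, q t z * Rq t z x * L x - p t z * Rp t z x * (q t x / p t x)
        = (q t z * Rq t z x * (L x - L z) - p t z * Rp t z x * (q t x / p t x)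
            + q t z * Rp t z x)
          + ((q t z * L z) * Rq t z x + (-(q t z)) * Rp t z x) := by
      intro x; ring
    have h1 : ∑ x, ((q t z * L z) * Rq t z x + (-(q t z)) * Rp t z x) = 0 := by
      rw [Finset.sum_add_distrib, ← Finset.mul_sum, ← Finset.mul_sum,
        hRqrow t z, hRprow t z, mul_zero, mul_zero, add_zero]
    calc ∑ x, (q t z * Rq t z x * L x - p t z * Rp t z x * (q t x / p t x))
        = ∑ x, ((q t z * Rq t z x * (L x - L z) - p t z * Rp t z x * (q t x / p t x)
              + q t z * Rp t z x)
            + ((q t z * L z) * Rq t z x + (-(q t z)) * Rp t z x)) :=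
          Finset.sum_congr rfl fun x _ => e1 x
      _ = ∑ x, (q t z * Rq t z x * (L x - L z) - p t z * Rp t z x * (q t x / p t x)
              + q t z * Rp t z x)
          + ∑ x, ((q t z * L z) * Rq t z x + (-(q t z)) * Rp t z x) :=
          Finset.sum_add_distrib
      _ = _ := by rw [h1, add_zero]
  rw [heq]
  have hdiag0 : q t z * Rq t z z * (L z - L z) - p t z * Rp t z z * (q t z / p t z)
      + q t z * Rp t z z = 0 := by
    have hp := (hppos t z).ne'
    field_simp
    ring
  rw [← Finset.sum_erase (f := fun x => q t z * Rq t z x * (L x - L z)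
      - p t z * Rp t z x * (q t x / p t x) + q t z * Rp t z x) Finset.univ hdiag0,
    Finset.filter_ne', Finset.mul_sum]
  refine Finset.sum_le_sum fun x hx => ?_
  have hxz : z ≠ x := (Finset.ne_of_mem_erase hx).symm
  exact key_ineq (q t z) (q t x) (p t z) (p t x) (Rq t z x) (Rp t z x)
    (hqpos t z) (hqpos t x) (hppos t z) (hppos t x) (hRqoff t z x hxz) (hRpoff t z x hxz)
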